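/- Let T ∈ {1,…,n} and Z = (Z₁,…,Zₙ) be jointly distributed with E[Zᵢ] = 0 and ‖Zᵢ‖_p ≤ σ for all i, where p > 1 and 1/p + 1/q = 1. Then |E[Z_T]| ≤ σ · n^{1/p} · H(T;q), where H(T;q) = (Σₜ (P_T(t)^{1/(1−q)} + (1−P_T(t))^{1/(1−q)})^{1−q})^{1/q}. -/

import Mathlib

open MeasureTheory Set ENNReal

lemma weight_calc {a b q : ℝ} (ha : 0 < a) (hb : 0 < b) (hq : 1 < q) :
    a * ((b ^ (1/(q-1))) / (a ^ (1/(q-1)) + b ^ (1/(q-1)))) ^ q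
      + b * ((a ^ (1/(q-1))) / (a ^ (1/(q-1)) + b ^ (1/(q-1)))) ^ q
      = a * b * (a ^ (1/(q-1)) + b ^ (1/(q-1))) ^ (1-q) := by
  have hq1 : q - 1 ≠ 0 := sub_ne_zero.mpr hq.ne'
  set s : ℝ := 1/(q-1) with hs
  have hx : (0:ℝ) < a ^ s := Real.rpow_pos_of_pos ha s
  have hy : (0:ℝ) < b ^ s := Real.rpow_pos_of_pos hb s
  have hD : (0:ℝ) < a ^ s + b ^ s := by positivity
  have hsq : s * q = s + 1 := by rw [hs]; field_simp; ring
  have hxq : (a ^ s) ^ q = a ^ s * a := by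
    rw [← Real.rpow_mul ha.le, hsq, Real.rpow_add ha, Real.rpow_one]
  have hyq : (b ^ s) ^ q = b ^ s * b := by
    rw [← Real.rpow_mul hb.le, hsq, Real.rpow_add hb, Real.rpow_one]
  have hDq : (a ^ s + b ^ s) ^ (1-q) = (a ^ s + b ^ s) / (a ^ s + b ^ s) ^ q := by
    rw [show (1:ℝ) - q = 1 + (-q) by ring, Real.rpow_add hD, Real.rpow_one,
      Real.rpow_neg hD.le, div_eq_mul_inv]
  have hDq0 : (0:ℝ) < (a ^ s + b ^ s) ^ q := Real.rpow_pos_of_pos hD q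
  rw [Real.div_rpow hy.le hD.le, Real.div_rpow hx.le hD.le, hxq, hyq, hDq]
  field_simp
  ring

lemma sum_neg_rpow {a b q : ℝ} (ha : 0 < a) (hb : 0 < b) (hq : 1 < q) :
    (a ^ (1/(1-q)) + b ^ (1/(1-q))) ^ (1-q)
      = a * b * (a ^ (1/(q-1)) + b ^ (1/(q-1))) ^ (1-q) := by
  have hq1 : q - 1 ≠ 0 := sub_ne_zero.mpr hq.ne'
  set s : ℝ := 1/(q-1) with hs
  have hx : (0:ℝ) < a ^ s := Real.rpow_pos_of_pos ha s
  have hy : (0:ℝ) < b ^ s := Real.rpow_pos_of_pos hb s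
  have hD : (0:ℝ) < a ^ s + b ^ s := by positivity
  have hneg : (1:ℝ)/(1-q) = -s := by
    rw [hs]; rw [show (1:ℝ)-q = -(q-1) by ring, div_neg]
  have hinva : a ^ (1/(1-q)) = (a ^ s)⁻¹ := by rw [hneg, Real.rpow_neg ha.le]
  have hinvb : b ^ (1/(1-q)) = (b ^ s)⁻¹ := by rw [hneg, Real.rpow_neg hb.le]
  have hsum : a ^ (1/(1-q)) + b ^ (1/(1-q)) = (a ^ s + b ^ s) * (a ^ s * b ^ s)⁻¹ := by
    rw [hinva, hinvb]; field_simp; ring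
  rw [hsum, Real.mul_rpow hD.le (by positivity), ← Real.rpow_neg_one (a ^ s * b ^ s),
    ← Real.rpow_mul (by positivity : (0:ℝ) ≤ a ^ s * b ^ s)]
  have h2 : (a ^ s * b ^ s) ^ ((-1) * (1 - q)) = a * b := by
    rw [← Real.mul_rpow ha.le hb.le, ← Real.rpow_mul (by positivity : (0:ℝ) ≤ a * b)]
    rw [show s * ((-1) * (1-q)) = (1:ℝ) by rw [hs]; field_simp; ring, Real.rpow_one]
  rw [h2]; ring

lemma sum_holder {n : ℕ} (y : Fin n → ℝ≥0∞) {p q : ℝ} (hpq : Real.HolderConjugate p q) :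
    ∑ t, y t ≤ (n : ℝ≥0∞) ^ (1/p) * (∑ t, y t ^ q) ^ (1/q) := by
  have h := ENNReal.lintegral_mul_le_Lp_mul_Lq (Measure.count : Measure (Fin n)) hpq
    (f := fun _ => 1) (g := y) aemeasurable_const Measurable.of_discrete.aemeasurable
  simp only [Pi.mul_apply, one_mul, ENNReal.one_rpow] at h
  simp only [lintegral_count, tsum_fintype] at h
  have h1 : ∑ _t : Fin n, (1:ℝ≥0∞) = (n : ℝ≥0∞) := by simp
  rwa [h1] at h

lemma decomp {Ω : Type*} [MeasurableSpace Ω] (μ : Measure Ω)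
    (n : ℕ) (Z : Fin n → Ω → ℝ) (T : Ω → Fin n) (hT : Measurable T)
    (hZint : ∀ i, Integrable (Z i) μ) :
    ∫ ω, Z (T ω) ω ∂μ = ∑ t : Fin n, ∫ ω in {ω | T ω = t}, Z t ω ∂μ := by
  have hAm : ∀ t : Fin n, MeasurableSet {ω | T ω = t} := fun t =>
    hT (measurableSet_singleton t)
  have h1 : ∀ ω, Z (T ω) ω = ∑ t : Fin n, ({ω' | T ω' = t}).indicator (Z t) ω := by
    intro ω
    rw [Finset.sum_eq_single (T ω)]
    · rw [Set.indicator_of_mem (by simp : ω ∈ {ω' | T ω' = T ω})]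
    · intro b _ hb
      exact Set.indicator_of_notMem (by simpa using fun h => hb h.symm) _
    · simp
  calc ∫ ω, Z (T ω) ω ∂μ
      = ∫ ω, ∑ t : Fin n, ({ω' | T ω' = t}).indicator (Z t) ω ∂μ := by
        exact integral_congr_ae (Filter.Eventually.of_forall h1)
    _ = ∑ t : Fin n, ∫ ω, ({ω' | T ω' = t}).indicator (Z t) ω ∂μ :=
        integral_finset_sum _ (fun t _ => (hZint t).indicator (hAm t))
    _ = ∑ t : Fin n, ∫ ω in {ω | T ω = t}, Z t ω ∂μ := by
        exact Finset.sum_congr rfl fun t _ => integral_indicator (hAm t)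

lemma per_set {Ω : Type*} [MeasurableSpace Ω] (μ : Measure Ω) [IsProbabilityMeasure μ]
    (f : Ω → ℝ) (hfm : Measurable f) (hfi : Integrable f μ) (hmean : ∫ ω, f ω ∂μ = 0)
    {p q : ℝ} (hpq : Real.HolderConjugate p q) {σ : ℝ}
    (hnorm : eLpNorm f (ENNReal.ofReal p) μ ≤ ENNReal.ofReal σ)
    {A : Set Ω} (hA : MeasurableSet A) :
    ENNReal.ofReal |∫ ω in A, f ω ∂μ| ≤ ENNReal.ofReal σ *
      (((μ A) ^ (1/(1-q)) + (1 - μ A) ^ (1/(1-q))) ^ (1-q)) ^ (1/q) := by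
  by_cases hA0 : μ A = 0
  · rw [Measure.restrict_eq_zero.mpr hA0, integral_zero_measure]
    simp
  by_cases hA1 : μ A = 1
  · have hcompl : μ Aᶜ = 0 := by
      rw [measure_compl hA (measure_ne_top μ A), hA1, measure_univ, tsub_self]
    have h2 : ∫ ω in Aᶜ, f ω ∂μ = 0 := by
      rw [Measure.restrict_eq_zero.mpr hcompl, integral_zero_measure]
    have h3 := integral_add_compl hA hfi (f := f)
    rw [h2, hmean, add_zero] at h3
    rw [h3]; simp
  have hq : 1 < q := hpq.symm.lt
  have hqne : q ≠ 0 := hpq.symm.pos.ne'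
  set a : ℝ := (μ A).toReal with ha_def
  have hμA : μ A = ENNReal.ofReal a := (ENNReal.ofReal_toReal (measure_ne_top μ A)).symm
  have ha0 : 0 < a := ENNReal.toReal_pos hA0 (measure_ne_top μ A)
  have ha1 : a < 1 := by
    have h := (ENNReal.toReal_lt_toReal (measure_ne_top μ A) one_ne_top).mpr
      (lt_of_le_of_ne prob_le_one hA1)
    simpa using h
  set b : ℝ := 1 - a with hb_def
  have hb0 : 0 < b := by simp [hb_def]; linarith
  have hμAc : μ Aᶜ = ENNReal.ofReal b := by
    rw [measure_compl hA (measure_ne_top μ A), measure_univ, hμA,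
      ← ENNReal.ofReal_one, ← ENNReal.ofReal_sub _ ha0.le]
  set s : ℝ := 1/(q-1) with hs
  have hx : (0:ℝ) < a ^ s := Real.rpow_pos_of_pos ha0 s
  have hy : (0:ℝ) < b ^ s := Real.rpow_pos_of_pos hb0 s
  have hD0 : (0:ℝ) < a ^ s + b ^ s := by positivity
  set c : ℝ := a ^ s / (a ^ s + b ^ s) with hc
  have hc0 : 0 < c := by positivity
  have hc1 : c < 1 := by rw [hc, div_lt_one hD0]; linarith
  have h1c : 1 - c = b ^ s / (a ^ s + b ^ s) := by rw [hc]; field_simp; ring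
  set g : Ω → ℝ := fun ω => A.indicator (fun _ => (1:ℝ)) ω - c with hg
  have hgm : Measurable g := (measurable_const.indicator hA).sub measurable_const
  -- step A
  have hfg : (fun ω => f ω * g ω) = fun ω => A.indicator f ω - c * f ω := by
    funext ω
    by_cases h : ω ∈ A <;> simp [hg, h] <;> ring
  have hintA : ∫ ω in A, f ω ∂μ = ∫ ω, f ω * g ω ∂μ := by
    rw [← integral_indicator hA, hfg, integral_sub (hfi.indicator hA) (hfi.const_mul c),
      integral_const_mul, hmean, mul_zero, sub_zero]
  -- step B
  have hB : ENNReal.ofReal |∫ ω, f ω * g ω ∂μ|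
      ≤ ∫⁻ ω, ((‖f ω‖₊ : ℝ≥0∞) * (‖g ω‖₊ : ℝ≥0∞)) ∂μ := by
    rw [← Real.enorm_eq_ofReal_abs]
    refine le_trans (enorm_integral_le_lintegral_enorm _) (le_of_eq ?_)
    simp_rw [enorm_mul, enorm_eq_nnnorm]
  -- step C
  have hC := ENNReal.lintegral_mul_le_Lp_mul_Lq μ hpq
    (hfm.nnnorm.coe_nnreal_ennreal.aemeasurable) (hgm.nnnorm.coe_nnreal_ennreal.aemeasurable)
  -- step D
  have hD : (∫⁻ ω, (‖f ω‖₊ : ℝ≥0∞) ^ p ∂μ) ^ (1/p) ≤ ENNReal.ofReal σ := by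
    have := eLpNorm_eq_lintegral_rpow_enorm_toReal (f := f) (μ := μ)
      (by simpa using hpq.pos.not_ge : ENNReal.ofReal p ≠ 0) ENNReal.ofReal_ne_top
    rw [this, ENNReal.toReal_ofReal hpq.pos.le] at hnorm
    exact hnorm
  -- step E
  have hgA : ∀ ω ∈ A, (‖g ω‖₊ : ℝ≥0∞) ^ q = ENNReal.ofReal ((1-c) ^ q) := by
    intro ω hω
    rw [← enorm_eq_nnnorm, Real.enorm_eq_ofReal_abs]
    rw [hg]; simp only [indicator_of_mem hω]
    rw [abs_of_pos (by linarith), ENNReal.ofReal_rpow_of_pos (by linarith)]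
  have hgAc : ∀ ω ∈ Aᶜ, (‖g ω‖₊ : ℝ≥0∞) ^ q = ENNReal.ofReal (c ^ q) := by
    intro ω hω
    rw [← enorm_eq_nnnorm, Real.enorm_eq_ofReal_abs]
    rw [hg]; simp only [indicator_of_notMem hω]
    rw [zero_sub, abs_neg, abs_of_pos hc0, ENNReal.ofReal_rpow_of_pos hc0]
  have hE1 : ∫⁻ ω, (‖g ω‖₊ : ℝ≥0∞) ^ q ∂μ
      = ENNReal.ofReal (a * (1-c) ^ q + b * c ^ q) := by
    rw [← lintegral_add_compl (fun ω => (‖g ω‖₊ : ℝ≥0∞) ^ q) hA]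
    rw [setLIntegral_congr_fun hA hgA,
      setLIntegral_congr_fun hA.compl hgAc,
      setLIntegral_const, setLIntegral_const, hμA, hμAc,
      ← ENNReal.ofReal_mul (Real.rpow_nonneg (by linarith) q),
      ← ENNReal.ofReal_mul (Real.rpow_nonneg hc0.le q),
      ← ENNReal.ofReal_add (mul_nonneg (Real.rpow_nonneg (by linarith) q) ha0.le) (mul_nonneg (Real.rpow_nonneg hc0.le q) hb0.le)]
    congr 1
    ring
  have hreal1 : a * (1-c) ^ q + b * c ^ q = a * b * (a ^ s + b ^ s) ^ (1-q) := by
    rw [h1c, hc]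
    exact weight_calc ha0 hb0 hq
  have hterm : ((μ A) ^ (1/(1-q)) + (1 - μ A) ^ (1/(1-q))) ^ (1-q)
      = ENNReal.ofReal (a * b * (a ^ s + b ^ s) ^ (1-q)) := by
    have h1 : (1:ℝ≥0∞) - μ A = ENNReal.ofReal b := by
      rw [hμA, ← ENNReal.ofReal_one, ← ENNReal.ofReal_sub _ ha0.le]
    rw [h1, hμA, ENNReal.ofReal_rpow_of_pos ha0, ENNReal.ofReal_rpow_of_pos hb0,
      ← ENNReal.ofReal_add (Real.rpow_nonneg ha0.le _) (Real.rpow_nonneg hb0.le _),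
      ENNReal.ofReal_rpow_of_pos (by positivity), sum_neg_rpow ha0 hb0 hq]
  have hgq : ∫⁻ ω, (‖g ω‖₊ : ℝ≥0∞) ^ q ∂μ
      = ((μ A) ^ (1/(1-q)) + (1 - μ A) ^ (1/(1-q))) ^ (1-q) := by
    rw [hE1, hreal1, hterm]
  calc ENNReal.ofReal |∫ ω in A, f ω ∂μ|
      = ENNReal.ofReal |∫ ω, f ω * g ω ∂μ| := by rw [hintA]
    _ ≤ ∫⁻ ω, ((‖f ω‖₊ : ℝ≥0∞) * (‖g ω‖₊ : ℝ≥0∞)) ∂μ := hB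
    _ ≤ (∫⁻ ω, (‖f ω‖₊ : ℝ≥0∞) ^ p ∂μ) ^ (1/p)
          * (∫⁻ ω, (‖g ω‖₊ : ℝ≥0∞) ^ q ∂μ) ^ (1/q) := hC
    _ ≤ ENNReal.ofReal σ
          * (((μ A) ^ (1/(1-q)) + (1 - μ A) ^ (1/(1-q))) ^ (1-q)) ^ (1/q) := by
        rw [hgq]
        exact mul_le_mul' hD le_rfl

/-- The functional `H(T;q) = (Σₜ (P_T(t)^{1/(1-q)} + (1-P_T(t))^{1/(1-q)})^{1-q})^{1/q}`
for `1 < q < ∞`; the `ℝ≥0∞`-valued power conventions (`0^{neg} = ∞`, `∞^{neg} = 0`)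
make terms with `P_T(t) ∈ {0,1}` contribute `0`, consistent with continuity. -/
noncomputable def Hq {Ω : Type*} [MeasurableSpace Ω] (μ : MeasureTheory.Measure Ω)
    (n : ℕ) (T : Ω → Fin n) (q : ℝ) : ℝ≥0∞ :=
  (∑ t : Fin n,
    ((μ {ω | T ω = t}) ^ (1 / (1 - q)) + (1 - μ {ω | T ω = t}) ^ (1 / (1 - q)))
      ^ (1 - q)) ^ (1 / q)

/-- Main theorem, marginal form: if `E[Zᵢ] = 0`, `‖Zᵢ‖_p ≤ σ`, `p > 1`,
`1/p + 1/q = 1`, then `|E[Z_T]| ≤ σ n^{1/p} H(T;q)`. -/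
theorem stmt12 {Ω : Type*} [MeasurableSpace Ω] (μ : Measure Ω) [IsProbabilityMeasure μ]
    (n : ℕ) (Z : Fin n → Ω → ℝ) (T : Ω → Fin n) (hT : Measurable T)
    (hZm : ∀ i, Measurable (Z i)) (hZint : ∀ i, Integrable (Z i) μ)
    (hmean : ∀ i, ∫ ω, Z i ω ∂μ = 0)
    (p q : ℝ) (hp : 1 < p) (hpq : 1 / p + 1 / q = 1)
    (σ : ℝ) (hσ : 0 < σ)
    (hnorm : ∀ i, eLpNorm (Z i) (ENNReal.ofReal p) μ ≤ ENNReal.ofReal σ) :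
    ENNReal.ofReal |∫ ω, Z (T ω) ω ∂μ| ≤
      ENNReal.ofReal σ * (n : ℝ≥0∞) ^ (1 / p) * Hq μ n T q := by
  have hpq' : Real.HolderConjugate p q := Real.holderConjugate_iff.mpr ⟨hp, by simpa [one_div] using hpq⟩
  have hqne : q ≠ 0 := hpq'.symm.pos.ne'
  have hAm : ∀ t : Fin n, MeasurableSet {ω | T ω = t} := fun t =>
    hT (measurableSet_singleton t)
  rw [decomp μ n Z T hT hZint]
  set term : Fin n → ℝ≥0∞ := fun t =>
    ((μ {ω | T ω = t}) ^ (1/(1-q)) + (1 - μ {ω | T ω = t}) ^ (1/(1-q))) ^ (1-q)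
    with hterm
  calc ENNReal.ofReal |∑ t : Fin n, ∫ ω in {ω | T ω = t}, Z t ω ∂μ|
      ≤ ∑ t : Fin n, ENNReal.ofReal |∫ ω in {ω | T ω = t}, Z t ω ∂μ| := by
        refine le_trans (ENNReal.ofReal_le_ofReal (Finset.abs_sum_le_sum_abs _ _)) ?_
        rw [ENNReal.ofReal_sum_of_nonneg (fun i _ => abs_nonneg _)]
    _ ≤ ∑ t : Fin n, ENNReal.ofReal σ * (term t) ^ (1/q) :=
        Finset.sum_le_sum fun t _ =>
          per_set μ (Z t) (hZm t) (hZint t) (hmean t) hpq' (hnorm t) (hAm t)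
    _ = ENNReal.ofReal σ * ∑ t : Fin n, (term t) ^ (1/q) := by rw [Finset.mul_sum]
    _ ≤ ENNReal.ofReal σ * ((n:ℝ≥0∞) ^ (1/p) * (∑ t : Fin n, ((term t)^(1/q)) ^ q) ^ (1/q)) :=
        mul_le_mul' le_rfl (sum_holder _ hpq')
    _ = ENNReal.ofReal σ * (n : ℝ≥0∞) ^ (1/p) * Hq μ n T q := by
        have h2 : ∀ t : Fin n, ((term t)^(1/q))^q = term t := fun t => by
          rw [← ENNReal.rpow_mul, one_div_mul_cancel hqne, ENNReal.rpow_one]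
        simp_rw [h2]
        rw [Hq, ← hterm, mul_assoc]
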